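/- Assume the cost function c takes values in ℕ. For u ∈ V and i ∈ ℤ define r'_{u,i} := min over all edges e ∈ E with head(e) = u and c(e) ≥ 1 of ( r_{tail(e), i − c(e)} + r(e) ) (∞ if no such edge exists), and for u, v ∈ V define d₀(u, v) ∈ [0, ∞] as the minimum of R_G(p) over paths from u to v that use only edges of cost 0 (with d₀(u, u) = 0 via the empty path, and ∞ if no such path exists). Then for every v ∈ V and every i ≥ 0: r_{v,i} = min( d₀(s, v), min over u ∈ V with u ≠ s of ( r'_{u,i} + d₀(u, v) ) ). -/

import Mathlib

open scoped ENNReal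

/-- `IsWalk tl hd u v p` : the list of edges `p` forms a walk from `u` to `v`
in the directed multigraph whose edges `e` go from `tl e` to `hd e`. -/
def IsWalk {V E : Type} (tl hd : E → V) : V → V → List E → Prop
  | u, v, [] => u = v
  | u, v, e :: es => tl e = u ∧ IsWalk tl hd (hd e) v es

/-- `IsPath tl hd u v p` : `p` is a walk from `u` to `v` visiting pairwise
distinct vertices. -/
def IsPath {V E : Type} (tl hd : E → V) (u v : V) (p : List E) : Prop :=
  IsWalk tl hd u v p ∧ (u :: p.map hd).Nodup

/-- `rDP tl hd c r s v i` is the value `r_{v,i} ∈ [0,∞]`: the minimum resource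
consumption of a path from `s` to `v` of cost at most `i`, and `∞` if no such
path exists. -/
noncomputable def rDP {V E : Type} (tl hd : E → V) (c : E → ℕ) (r : E → ℝ)
    (s v : V) (i : ℤ) : ℝ≥0∞ :=
  ⨅ (p : List E) (_ : IsPath tl hd s v p ∧ ((p.map c).sum : ℤ) ≤ i),
    ENNReal.ofReal ((p.map r).sum)

/-- `rDP' tl hd c r s u i` is the value `r'_{u,i}`: the minimum over all edges
`e` into `u` of positive cost of `r_{tail e, i - c e} + r e` (`∞` if no such
edge exists). -/
noncomputable def rDP' {V E : Type} (tl hd : E → V) (c : E → ℕ) (r : E → ℝ)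
    (s u : V) (i : ℤ) : ℝ≥0∞ :=
  ⨅ (e : E) (_ : hd e = u ∧ 1 ≤ c e),
    rDP tl hd c r s (tl e) (i - c e) + ENNReal.ofReal (r e)

/-- `dZero tl hd c r u v` is the minimum resource consumption of a path from
`u` to `v` using only zero-cost edges (`∞` if no such path exists; `0` for
`u = v` via the empty path). -/
noncomputable def dZero {V E : Type} (tl hd : E → V) (c : E → ℕ) (r : E → ℝ)
    (u v : V) : ℝ≥0∞ :=
  ⨅ (p : List E) (_ : IsPath tl hd u v p ∧ ∀ e ∈ p, c e = 0),
    ENNReal.ofReal ((p.map r).sum)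

section aux
variable {V E : Type} (tl hd : E → V)

lemma isWalk_append {u v w : V} {p q : List E} (hp : IsWalk tl hd u v p)
    (hq : IsWalk tl hd v w q) : IsWalk tl hd u w (p ++ q) := by
  induction p generalizing u with
  | nil => cases hp; simpa using hq
  | cons e es ih => exact ⟨hp.1, ih hp.2⟩

lemma isWalk_split {u w : V} {p q : List E} (h : IsWalk tl hd u w (p ++ q)) :
    ∃ v, IsWalk tl hd u v p ∧ IsWalk tl hd v w q := by
  induction p generalizing u with
  | nil => exact ⟨u, rfl, h⟩
  | cons e es ih =>
    obtain ⟨v, h1, h2⟩ := ih h.2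
    exact ⟨v, ⟨h.1, h1⟩, h2⟩

lemma exists_path_of_walk_aux : ∀ n (p : List E), p.length ≤ n → ∀ u v : V,
    IsWalk tl hd u v p → ∃ q, q.Sublist p ∧ IsPath tl hd u v q := by
  intro n
  induction n with
  | zero =>
    intro p hp u v hw
    rw [Nat.le_zero, List.length_eq_zero_iff] at hp
    subst hp
    exact ⟨[], List.Sublist.refl _, hw, by simp⟩
  | succ n ih =>
    intro p hp u v hw
    by_cases hu : u ∈ p.map hd
    · obtain ⟨e, he, hehd⟩ := List.mem_map.1 hu
      obtain ⟨p1, p2, rfl⟩ := List.append_of_mem he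
      obtain ⟨x, hx1, hx2⟩ := isWalk_split tl hd hw
      have hw2 : IsWalk tl hd u v p2 := by rw [← hehd]; exact hx2.2
      have hlen : p2.length ≤ n := by
        have := hp
        simp only [List.length_append, List.length_cons] at this
        omega
      obtain ⟨q, hq1, hq2⟩ := ih p2 hlen u v hw2
      exact ⟨q, hq1.trans ((List.sublist_cons_self e p2).trans
        (List.sublist_append_right p1 (e :: p2))), hq2⟩
    · match p, hp, hw, hu with
      | [], _, hw, _ => exact ⟨[], List.Sublist.refl _, hw, by simp⟩
      | e :: p', hp, hw, hu =>
        have hlen : p'.length ≤ n := by simpa using hp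
        obtain ⟨q, hq1, hq2⟩ := ih p' hlen (hd e) v hw.2
        simp only [List.map_cons, List.mem_cons, not_or] at hu
        refine ⟨e :: q, hq1.cons₂ e, ⟨hw.1, hq2.1⟩, ?_⟩
        simp only [List.map_cons, List.nodup_cons]
        refine ⟨?_, List.nodup_cons.1 hq2.2⟩
        simp only [List.mem_cons, not_or]
        exact ⟨hu.1, fun h => hu.2 ((hq1.map hd).subset h)⟩

lemma exists_path_of_walk {u v : V} {p : List E} (hw : IsWalk tl hd u v p) :
    ∃ q, q.Sublist p ∧ IsPath tl hd u v q :=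
  exists_path_of_walk_aux tl hd p.length p le_rfl u v hw

lemma isPath_split {u v : V} {p1 p2 : List E} {e : E}
    (h : IsPath tl hd u v (p1 ++ e :: p2)) :
    IsPath tl hd u (tl e) p1 ∧ IsPath tl hd (hd e) v p2 ∧ hd e ≠ u := by
  obtain ⟨hw, hnd⟩ := h
  obtain ⟨x, hx1, hx2⟩ := isWalk_split tl hd hw
  obtain ⟨hte, hw2⟩ := hx2
  subst hte
  simp only [List.map_append, List.map_cons] at hnd
  refine ⟨⟨hx1, ?_⟩, ⟨hw2, ?_⟩, ?_⟩
  · exact ((List.cons_sublist_cons.2 (List.sublist_append_left _ _)).nodup hnd)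
  · exact (((List.sublist_append_right _ _).trans (List.sublist_cons_self u _)).nodup hnd)
  · intro hcontra
    have hmem : u ∈ List.map hd p1 ++ hd e :: List.map hd p2 := by
      rw [← hcontra]; exact List.mem_append_right _ List.mem_cons_self
    exact (List.nodup_cons.1 hnd).1 hmem

lemma exists_last_pos (c : E → ℕ) : ∀ p : List E, (¬ ∀ e ∈ p, c e = 0) →
    ∃ p1 e p2, p = p1 ++ e :: p2 ∧ c e ≠ 0 ∧ ∀ f ∈ p2, c f = 0 := by
  intro p
  induction p with
  | nil => simp
  | cons a p ih =>
    intro hn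
    by_cases h : ∀ e ∈ p, c e = 0
    · have ha : c a ≠ 0 := by
        intro ha
        exact hn (by simpa [ha] using h)
      exact ⟨[], a, p, rfl, ha, h⟩
    · obtain ⟨p1, e, p2, rfl, he, h2⟩ := ih h
      exact ⟨a :: p1, e, p2, rfl, he, h2⟩

lemma ennreal_le_biInf_add {ι : Type*} {P : ι → Prop} {f : ι → ℝ≥0∞} {a b : ℝ≥0∞}
    (h : ∀ i, P i → a ≤ f i + b) : a ≤ (⨅ i, ⨅ _ : P i, f i) + b := by
  simp only [ENNReal.iInf_add]
  exact le_iInf fun i => le_iInf fun hi => h i hi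

lemma ennreal_le_add_biInf {ι : Type*} {P : ι → Prop} {f : ι → ℝ≥0∞} {a b : ℝ≥0∞}
    (h : ∀ i, P i → a ≤ b + f i) : a ≤ b + (⨅ i, ⨅ _ : P i, f i) := by
  simp only [ENNReal.add_iInf]
  exact le_iInf fun i => le_iInf fun hi => h i hi

end aux

/-- Lemma: with natural-number costs, for every vertex `v` and every `i ≥ 0`,
`r_{v,i} = min (d₀(s,v), min over u ≠ s of (r'_{u,i} + d₀(u,v)))`. -/
theorem stmt_13 {V E : Type} [Fintype V] [Fintype E]
    (tl hd : E → V) (c : E → ℕ) (r : E → ℝ) (hr : ∀ e, 0 ≤ r e)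
    (hn : 2 ≤ Fintype.card V) (s : V) :
    ∀ v : V, ∀ i : ℤ, 0 ≤ i →
      rDP tl hd c r s v i =
        min (dZero tl hd c r s v)
          (⨅ (u : V) (_ : u ≠ s), rDP' tl hd c r s u i + dZero tl hd c r u v) := by
  have hsum : ∀ l : List E, 0 ≤ (l.map r).sum := fun l =>
    List.sum_nonneg fun x hx => by
      obtain ⟨e, _, rfl⟩ := List.mem_map.1 hx; exact hr e
  intro v i hi
  apply le_antisymm
  · apply le_min
    · -- rDP ≤ dZero s v
      rw [dZero]
      refine le_iInf fun p => le_iInf fun hp => ?_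
      rw [rDP]
      refine iInf₂_le p ⟨hp.1, ?_⟩
      have h0 : (p.map c).sum = 0 := List.sum_eq_zero fun x hx => by
        obtain ⟨e, he, rfl⟩ := List.mem_map.1 hx; exact hp.2 e he
      rw [h0]; exact_mod_cast hi
    · refine le_iInf fun u => le_iInf fun hu => ?_
      rw [rDP', dZero]
      refine ennreal_le_biInf_add fun e he => ?_
      refine ennreal_le_add_biInf fun q hq => ?_
      rw [rDP, add_assoc]
      refine ennreal_le_biInf_add fun p hp => ?_
      -- core: combine walk p ++ e :: q from s to v
      have hwq : IsWalk tl hd (hd e) v q := by rw [he.1]; exact hq.1.1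
      have hw : IsWalk tl hd s v (p ++ e :: q) :=
        isWalk_append tl hd hp.1.1 ⟨rfl, hwq⟩
      obtain ⟨p', hsub, hpath'⟩ := exists_path_of_walk tl hd hw
      have hcost : ((p'.map c).sum : ℤ) ≤ i := by
        have h1 : (p'.map c).sum ≤ (p.map c).sum + (c e + (q.map c).sum) := by
          have := (hsub.map c).sum_le_sum (fun a _ => Nat.zero_le a)
          simpa [List.sum_append] using this
        have hq0 : (q.map c).sum = 0 := List.sum_eq_zero fun x hx => by
          obtain ⟨f, hf, rfl⟩ := List.mem_map.1 hx; exact hq.2 f hf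
        have hp2 := hp.2
        omega
      have hres : (p'.map r).sum ≤ (p.map r).sum + (r e + (q.map r).sum) := by
        have := (hsub.map r).sum_le_sum (fun a ha => by
          obtain ⟨f, _, rfl⟩ := List.mem_map.1 ha; exact hr f)
        simpa [List.sum_append] using this
      refine le_trans (iInf₂_le p' ⟨hpath', hcost⟩) ?_
      calc ENNReal.ofReal ((p'.map r).sum)
          ≤ ENNReal.ofReal ((p.map r).sum + (r e + (q.map r).sum)) :=
            ENNReal.ofReal_le_ofReal hres
        _ = ENNReal.ofReal ((p.map r).sum) +
              (ENNReal.ofReal (r e) + ENNReal.ofReal ((q.map r).sum)) := by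
            rw [ENNReal.ofReal_add (hsum p) (add_nonneg (hr e) (hsum q)),
              ENNReal.ofReal_add (hr e) (hsum q)]
  · rw [rDP]
    refine le_iInf fun p => le_iInf fun hp => ?_
    by_cases hz : ∀ e ∈ p, c e = 0
    · refine le_trans (min_le_left _ _) ?_
      rw [dZero]
      exact iInf₂_le p ⟨hp.1, hz⟩
    · obtain ⟨p1, e, p2, rfl, he, h2⟩ := exists_last_pos c p hz
      obtain ⟨hpath1, hpath2, hne⟩ := isPath_split tl hd hp.1
      refine le_trans (min_le_right _ _) ?_
      refine le_trans (iInf₂_le (hd e) hne) ?_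
      have hcost1 : ((p1.map c).sum : ℤ) ≤ i - c e := by
        have hp2 := hp.2
        have hq0 : (p2.map c).sum = 0 := List.sum_eq_zero fun x hx => by
          obtain ⟨f, hf, rfl⟩ := List.mem_map.1 hx; exact h2 f hf
        have hsplit : ((p1 ++ e :: p2).map c).sum
            = (p1.map c).sum + (c e + (p2.map c).sum) := by
          simp [List.sum_append]
        rw [hsplit] at hp2
        omega
      have hA : rDP' tl hd c r s (hd e) i
          ≤ ENNReal.ofReal ((p1.map r).sum) + ENNReal.ofReal (r e) := by
        rw [rDP']
        refine le_trans (iInf₂_le e ⟨rfl, Nat.one_le_iff_ne_zero.2 he⟩) ?_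
        refine add_le_add ?_ le_rfl
        rw [rDP]
        exact iInf₂_le p1 ⟨hpath1, hcost1⟩
      have hB : dZero tl hd c r (hd e) v ≤ ENNReal.ofReal ((p2.map r).sum) := by
        rw [dZero]
        exact iInf₂_le p2 ⟨hpath2, h2⟩
      calc rDP' tl hd c r s (hd e) i + dZero tl hd c r (hd e) v
          ≤ (ENNReal.ofReal ((p1.map r).sum) + ENNReal.ofReal (r e)) +
              ENNReal.ofReal ((p2.map r).sum) := add_le_add hA hB
        _ = ENNReal.ofReal (((p1 ++ e :: p2).map r).sum) := by
            rw [← ENNReal.ofReal_add (hsum p1) (hr e),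
              ← ENNReal.ofReal_add (add_nonneg (hsum p1) (hr e)) (hsum p2)]
            congr 1
            simp [List.sum_append]
            ring
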